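/- Let R be a commutative Bezout domain and let a be a nonzero nonunit element of R such that R/aR is a local ring. Then a is an adequate element of R. -/
import Mathlib


/-- An element `a` of a commutative ring is adequate if for every `b` there exist `r, s`
with `a = r * s`, `rR + bR = R`, and `s'R + bR ≠ R` for every nonunit `s'` with
`sR ⊆ s'R`. -/
def IsAdequateElement {R : Type*} [CommRing R] (a : R) : Prop :=
  ∀ b : R, ∃ r s : R, a = r * s ∧
    Ideal.span {r} + Ideal.span {b} = ⊤ ∧
    ∀ s' : R, ¬IsUnit s' → Ideal.span {s} ≤ Ideal.span ({s'} : Set R) →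
      Ideal.span {s'} + Ideal.span {b} ≠ ⊤

theorem adequate_of_local_quotient {R : Type*} [CommRing R] [IsDomain R] [IsBezout R]
    (a : R) (ha : a ≠ 0) (hu : ¬IsUnit a)
    (hloc : IsLocalRing (R ⧸ Ideal.span {a})) :
    IsAdequateElement a := by
  intro b
  set f := Ideal.Quotient.mk (Ideal.span {a}) with hf
  set m := (IsLocalRing.maximalIdeal (R ⧸ Ideal.span {a})).comap f with hm
  have hsurj : Function.Surjective f := Ideal.Quotient.mk_surjective
  have key : ∀ M : Ideal R, M.IsMaximal → Ideal.span {a} ≤ M → M = m := by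
    intro M hM hle
    have hker : RingHom.ker f ≤ M := by rwa [Ideal.mk_ker]
    have hcm : Ideal.comap f (Ideal.map f M) = M := by
      rw [Ideal.comap_map_of_surjective f hsurj, ← RingHom.ker_eq_comap_bot, Ideal.mk_ker, sup_eq_left.mpr hle]
    rcases Ideal.map_eq_top_or_isMaximal_of_surjective f hsurj hM with h | h
    · exfalso
      have : M = ⊤ := by rw [← hcm, h, Ideal.comap_top]
      exact hM.ne_top this
    · have : Ideal.map f M = IsLocalRing.maximalIdeal _ :=
        IsLocalRing.eq_maximalIdeal h
      rw [← hcm, this, hm]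
  have ham : a ∈ m := by
    simp only [hm, Ideal.mem_comap]
    have : f a = 0 := by
      rw [hf, Ideal.Quotient.eq_zero_iff_mem]
      exact Ideal.subset_span rfl
    rw [this]
    exact (IsLocalRing.maximalIdeal _).zero_mem
  have hmne : m ≠ ⊤ := by
    intro h
    have : f 1 ∈ IsLocalRing.maximalIdeal _ := by
      have : (1 : R) ∈ m := h ▸ Submodule.mem_top
      exact this
    simp only [map_one] at this
    exact (IsLocalRing.maximalIdeal.isMaximal _).ne_top
      ((Ideal.eq_top_iff_one _).mpr this)
  by_cases hb : b ∈ m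
  · refine ⟨1, a, (one_mul a).symm, ?_, ?_⟩
    · rw [Ideal.span_singleton_one, Ideal.add_eq_sup, top_sup_eq]
    · intro s' hs' hle hTop
      have hne : Ideal.span {s'} ≠ ⊤ := by
        rwa [Ne, Ideal.span_singleton_eq_top]
      obtain ⟨M, hM, hMle⟩ := Ideal.exists_le_maximal _ hne
      have hMa : Ideal.span {a} ≤ M := le_trans hle hMle
      have hMm : M = m := key M hM hMa
      have : Ideal.span {s'} + Ideal.span {b} ≤ m := by
        apply sup_le
        · rw [← hMm]; exact hMle
        · rwa [Ideal.span_singleton_le_iff_mem]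
      rw [hTop] at this
      exact hmne (top_le_iff.mp this)
  · refine ⟨a, 1, (mul_one a).symm, ?_, ?_⟩
    · by_contra h
      obtain ⟨M, hM, hMle⟩ := Ideal.exists_le_maximal _ h
      have hMa : Ideal.span {a} ≤ M := le_trans le_sup_left hMle
      have hMm : M = m := key M hM hMa
      exact hb (hMm ▸ hMle (le_sup_right (a := Ideal.span {a})
        (Ideal.subset_span (Set.mem_singleton b))))
    · intro s' hs' hle _
      apply hs'
      rw [← Ideal.span_singleton_eq_top]
      rw [Ideal.span_singleton_one] at hle
      exact top_le_iff.mp hle
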